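/- Let q > 0 and e ≥ 0 be real numbers, let n ≥ 2 be an integer, and let Q be the 2n×2n real matrix with entries (indices i,j ∈ {1,…,2n}): Q_{ij} = 0 if i+j < 2n+1; Q_{ij} = (q−1+δ_{i+j,2n+1})·q^{n(n+e−3)−e+j} if i+j ≥ 2n+1 and j ≤ n; and Q_{ij} = (q−1+δ_{i+j,2n+1})·q^{n(n+e−3)+j−1} + δ_{ij}·q^{n(n+e−2)−e}·(q^e−q) if i+j ≥ 2n+1 and j > n (real powers of q; δ the Kronecker delta). For i ∈ {1,…,n} let v_i be the column vector (0,…,0, q^{e+i−1},…,q^{e+i−1}, −1,…,−1, 0,…,0)ᵀ with n−i leading zeros, then i entries equal to q^{e+i−1}, then i entries equal to −1, then n−i trailing zeros. Then Q·v_i = −q^{(n−1)(n−1+e)}·v_i, i.e. v_i is an eigenvector of Q with eigenvalue −q^{(n−1)(n−1+e)}. -/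
import Mathlib


open Real

/-- The quotient matrix `Q` of the opposition graph on maximal flags of a rank-`n` polar
space `PS(n,e,q)` with respect to a point stabilizer; rows/columns are indexed by
`Fin (2n)`, where `a : Fin (2n)` corresponds to the `1`-based index `i = a+1 ∈ {1,…,2n}`.
All powers of `q` are real powers. -/
noncomputable def QmatB (q e : ℝ) (n : ℕ) : Matrix (Fin (2 * n)) (Fin (2 * n)) ℝ :=
  fun a b =>
    if (a : ℕ) + 1 + ((b : ℕ) + 1) < 2 * n + 1 then 0
    else if (b : ℕ) + 1 ≤ n then
      (q - 1 + (if (a : ℕ) + 1 + ((b : ℕ) + 1) = 2 * n + 1 then 1 else 0)) *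
        q ^ ((n : ℝ) * ((n : ℝ) + e - 3) - e + (((b : ℕ) : ℝ) + 1))
    else
      (q - 1 + (if (a : ℕ) + 1 + ((b : ℕ) + 1) = 2 * n + 1 then 1 else 0)) *
          q ^ ((n : ℝ) * ((n : ℝ) + e - 3) + (((b : ℕ) : ℝ) + 1) - 1) +
        (if a = b then 1 else 0) * q ^ ((n : ℝ) * ((n : ℝ) + e - 2) - e) * (q ^ e - q)

/-- The vector `v_i = (0,…,0,q^(e+i-1),…,q^(e+i-1),-1,…,-1,0,…,0)ᵀ` with `n-i` leading
zeros, `i` entries `q^(e+i-1)`, `i` entries `-1` and `n-i` trailing zeros. -/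
noncomputable def vvecB (q e : ℝ) (n i : ℕ) : Fin (2 * n) → ℝ :=
  fun k =>
    if (k : ℕ) + 1 ≤ n - i then 0
    else if (k : ℕ) + 1 ≤ n then q ^ (e + (i : ℝ) - 1)
    else if (k : ℕ) + 1 ≤ n + i then -1
    else 0

/-- ℕ-indexed version of `QmatB`. -/
noncomputable def QnB (q e : ℝ) (n k j : ℕ) : ℝ :=
  if k + 1 + (j + 1) < 2 * n + 1 then 0
  else if j + 1 ≤ n then
    (q - 1 + (if k + 1 + (j + 1) = 2 * n + 1 then 1 else 0)) *
      q ^ ((n : ℝ) * ((n : ℝ) + e - 3) - e + ((j : ℝ) + 1))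
  else
    (q - 1 + (if k + 1 + (j + 1) = 2 * n + 1 then 1 else 0)) *
        q ^ ((n : ℝ) * ((n : ℝ) + e - 3) + ((j : ℝ) + 1) - 1) +
      (if k = j then 1 else 0) * q ^ ((n : ℝ) * ((n : ℝ) + e - 2) - e) * (q ^ e - q)

/-- ℕ-indexed version of `vvecB`. -/
noncomputable def vnB (q e : ℝ) (n i j : ℕ) : ℝ :=
  if j + 1 ≤ n - i then 0
  else if j + 1 ≤ n then q ^ (e + (i : ℝ) - 1)
  else if j + 1 ≤ n + i then -1
  else 0

lemma QmatB_eq_QnB (q e : ℝ) (n : ℕ) (a b : Fin (2 * n)) :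
    QmatB q e n a b = QnB q e n (a : ℕ) (b : ℕ) := by
  simp only [QmatB, QnB, Fin.ext_iff]

lemma vvecB_eq_vnB (q e : ℝ) (n i : ℕ) (a : Fin (2 * n)) :
    vvecB q e n i a = vnB q e n i (a : ℕ) := rfl

lemma geom_tele (q c : ℝ) {a b : ℕ} (hab : a ≤ b) :
    ∑ j ∈ Finset.Ico a b, (q - 1) * (c * q ^ j) = c * q ^ b - c * q ^ a := by
  calc ∑ j ∈ Finset.Ico a b, (q-1)*(c*q^j)
      = ∑ j ∈ Finset.Ico a b, ((fun m => c*q^m) (j+1) - (fun m => c*q^m) j) := by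
        refine Finset.sum_congr rfl fun j _ => ?_
        simp only [pow_succ]; ring
    _ = _ := by
        rw [Finset.sum_Ico_eq_sub _ hab, Finset.sum_range_sub (fun m => c*q^m),
          Finset.sum_range_sub (fun m => c*q^m)]
        ring

lemma keyB (q : ℝ) (hq : 0 < q) (e : ℝ)
    (n : ℕ) (hn : 2 ≤ n) (i : ℕ) (hi1 : 1 ≤ i) (hi2 : i ≤ n) (k : ℕ) (hk : k < 2 * n) :
    ∑ j ∈ Finset.range (2 * n), QnB q e n k j * vnB q e n i j
      = -(q ^ (((n : ℝ) - 1) * ((n : ℝ) - 1 + e))) * vnB q e n i k := by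
  rcases le_or_gt (k + 1) (n - i) with hc1 | hc1
  · -- Case 1: row in the leading-zero block
    have hv : vnB q e n i k = 0 := by rw [vnB, if_pos hc1]
    rw [hv, mul_zero]
    apply Finset.sum_eq_zero
    intro j hj
    rw [Finset.mem_range] at hj
    by_cases h : k + 1 + (j + 1) < 2 * n + 1
    · rw [QnB, if_pos h, zero_mul]
    · have c5 : ¬ (j + 1 ≤ n - i) := by omega
      have c6 : ¬ (j + 1 ≤ n) := by omega
      have c7 : ¬ (j + 1 ≤ n + i) := by omega
      rw [vnB, if_neg c5, if_neg c6, if_neg c7, mul_zero]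
  rcases le_or_gt (k + 1) n with hc2 | hc2
  · -- Case 2: v_k = q^(e+i-1)
    have hv : vnB q e n i k = q ^ (e + (i : ℝ) - 1) := by
      rw [vnB, if_neg (by omega), if_pos hc2]
    rw [hv]
    have hsub : Finset.Ico (2*n-1-k) (n+i) ⊆ Finset.range (2*n) := by
      intro j hj; rw [Finset.mem_Ico] at hj; rw [Finset.mem_range]; omega
    have hzero : ∀ j ∈ Finset.range (2*n), j ∉ Finset.Ico (2*n-1-k) (n+i) →
        QnB q e n k j * vnB q e n i j = 0 := by
      intro j hj hnot
      rw [Finset.mem_range] at hj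
      rw [Finset.mem_Ico] at hnot; push_neg at hnot
      by_cases h : k + 1 + (j + 1) < 2 * n + 1
      · rw [QnB, if_pos h, zero_mul]
      · rw [vnB, if_neg (by omega), if_neg (by omega), if_neg (by omega), mul_zero]
    rw [← Finset.sum_subset hsub hzero,
      Finset.sum_eq_sum_Ico_succ_bot (show 2*n-1-k < n+i by omega)]
    have hfL : QnB q e n k (2*n-1-k) * vnB q e n i (2*n-1-k)
        = -(q ^ ((n:ℝ)*((n:ℝ)+e-3)) * q ^ (2*n-1-k+1)) := by
      have c1 : ¬ (k + 1 + (2*n-1-k + 1) < 2 * n + 1) := by omega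
      have c2 : ¬ (2*n-1-k + 1 ≤ n) := by omega
      have c3 : k + 1 + (2*n-1-k + 1) = 2 * n + 1 := by omega
      have c4 : ¬ (k = 2*n-1-k) := by omega
      have c5 : ¬ (2*n-1-k + 1 ≤ n - i) := by omega
      have c6 : 2*n-1-k + 1 ≤ n + i := by omega
      rw [QnB, vnB, if_neg c1, if_neg c2, if_pos c3, if_neg c4, if_neg c5, if_neg c2, if_pos c6]
      have h1 : (n:ℝ)*((n:ℝ)+e-3) + (((2*n-1-k : ℕ):ℝ) + 1) - 1
          = (n:ℝ)*((n:ℝ)+e-3) + ((2*n-1-k : ℕ):ℝ) := by ring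
      rw [h1, Real.rpow_add hq, Real.rpow_natCast, pow_succ]
      ring
    have hrest : ∀ j ∈ Finset.Ico (2*n-1-k+1) (n+i),
        QnB q e n k j * vnB q e n i j
          = (q-1) * (-(q ^ ((n:ℝ)*((n:ℝ)+e-3))) * q ^ j) := by
      intro j hj; rw [Finset.mem_Ico] at hj
      have c1 : ¬ (k + 1 + (j + 1) < 2 * n + 1) := by omega
      have c2 : ¬ (j + 1 ≤ n) := by omega
      have c3 : ¬ (k + 1 + (j + 1) = 2 * n + 1) := by omega
      have c4 : ¬ (k = j) := by omega
      have c5 : ¬ (j + 1 ≤ n - i) := by omega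
      have c6 : j + 1 ≤ n + i := by omega
      rw [QnB, vnB, if_neg c1, if_neg c2, if_neg c3, if_neg c4, if_neg c5, if_neg c2, if_pos c6]
      have h1 : (n:ℝ)*((n:ℝ)+e-3) + ((j:ℝ) + 1) - 1 = (n:ℝ)*((n:ℝ)+e-3) + (j:ℝ) := by ring
      rw [h1, Real.rpow_add hq, Real.rpow_natCast]
      ring
    rw [hfL, Finset.sum_congr rfl hrest, geom_tele q _ (by omega : 2*n-1-k+1 ≤ n+i)]
    have h2 : q ^ ((n:ℝ)*((n:ℝ)+e-3)) * q ^ (n+i)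
        = q ^ (((n:ℝ)-1)*((n:ℝ)-1+e)) * q ^ (e + (i:ℝ) - 1) := by
      rw [← Real.rpow_natCast q (n+i), ← Real.rpow_add hq, ← Real.rpow_add hq]
      congr 1; push_cast; ring
    linear_combination -h2
  rcases le_or_gt (k + 1) (n + i) with hc3 | hc3
  · -- Case 3: v_k = -1
    have hv : vnB q e n i k = -1 := by
      rw [vnB, if_neg (by omega), if_neg (by omega), if_pos hc3]
    rw [hv]
    have hsub : Finset.Ico (2*n-1-k) (n+i) ⊆ Finset.range (2*n) := by
      intro j hj; rw [Finset.mem_Ico] at hj; rw [Finset.mem_range]; omega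
    have hzero : ∀ j ∈ Finset.range (2*n), j ∉ Finset.Ico (2*n-1-k) (n+i) →
        QnB q e n k j * vnB q e n i j = 0 := by
      intro j hj hnot
      rw [Finset.mem_range] at hj
      rw [Finset.mem_Ico] at hnot; push_neg at hnot
      by_cases h : k + 1 + (j + 1) < 2 * n + 1
      · rw [QnB, if_pos h, zero_mul]
      · rw [vnB, if_neg (by omega), if_neg (by omega), if_neg (by omega), mul_zero]
    rw [← Finset.sum_subset hsub hzero,
      ← Finset.sum_Ico_consecutive _ (show 2*n-1-k ≤ n by omega) (show n ≤ n+i by omega),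
      Finset.sum_eq_sum_Ico_succ_bot (show 2*n-1-k < n by omega)]
    have hfL : QnB q e n k (2*n-1-k) * vnB q e n i (2*n-1-k)
        = (q ^ (e + (i:ℝ) - 1) * q ^ ((n:ℝ)*((n:ℝ)+e-3) - e + 1)) * q ^ (2*n-1-k+1) := by
      have c1 : ¬ (k + 1 + (2*n-1-k + 1) < 2 * n + 1) := by omega
      have c2 : 2*n-1-k + 1 ≤ n := by omega
      have c3 : k + 1 + (2*n-1-k + 1) = 2 * n + 1 := by omega
      have c5 : ¬ (2*n-1-k + 1 ≤ n - i) := by omega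
      rw [QnB, vnB, if_neg c1, if_pos c2, if_pos c3, if_neg c5, if_pos c2]
      have h1 : (n:ℝ)*((n:ℝ)+e-3) - e + (((2*n-1-k : ℕ):ℝ) + 1)
          = ((n:ℝ)*((n:ℝ)+e-3) - e + 1) + ((2*n-1-k : ℕ):ℝ) := by ring
      rw [h1, Real.rpow_add hq, Real.rpow_natCast, pow_succ]
      ring
    have hrestA : ∀ j ∈ Finset.Ico (2*n-1-k+1) n,
        QnB q e n k j * vnB q e n i j
          = (q-1) * ((q ^ (e + (i:ℝ) - 1) * q ^ ((n:ℝ)*((n:ℝ)+e-3) - e + 1)) * q ^ j) := by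
      intro j hj; rw [Finset.mem_Ico] at hj
      have c1 : ¬ (k + 1 + (j + 1) < 2 * n + 1) := by omega
      have c2 : j + 1 ≤ n := by omega
      have c3 : ¬ (k + 1 + (j + 1) = 2 * n + 1) := by omega
      have c5 : ¬ (j + 1 ≤ n - i) := by omega
      rw [QnB, vnB, if_neg c1, if_pos c2, if_neg c3, if_neg c5, if_pos c2]
      have h1 : (n:ℝ)*((n:ℝ)+e-3) - e + ((j:ℝ) + 1)
          = ((n:ℝ)*((n:ℝ)+e-3) - e + 1) + (j:ℝ) := by ring
      rw [h1, Real.rpow_add hq, Real.rpow_natCast]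
      ring
    have hrestB : ∀ j ∈ Finset.Ico n (n+i),
        QnB q e n k j * vnB q e n i j
          = (q-1) * (-(q ^ ((n:ℝ)*((n:ℝ)+e-3))) * q ^ j)
            + (if k = j then -(q ^ ((n:ℝ)*((n:ℝ)+e-2) - e) * (q ^ e - q)) else 0) := by
      intro j hj; rw [Finset.mem_Ico] at hj
      have c1 : ¬ (k + 1 + (j + 1) < 2 * n + 1) := by omega
      have c2 : ¬ (j + 1 ≤ n) := by omega
      have c3 : ¬ (k + 1 + (j + 1) = 2 * n + 1) := by omega
      have c5 : ¬ (j + 1 ≤ n - i) := by omega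
      have c6 : j + 1 ≤ n + i := by omega
      rw [QnB, vnB, if_neg c1, if_neg c2, if_neg c3, if_neg c5, if_neg c2, if_pos c6]
      have h1 : (n:ℝ)*((n:ℝ)+e-3) + ((j:ℝ) + 1) - 1 = (n:ℝ)*((n:ℝ)+e-3) + (j:ℝ) := by ring
      rw [h1, Real.rpow_add hq, Real.rpow_natCast]
      split_ifs with h <;> ring
    rw [hfL, Finset.sum_congr rfl hrestA, Finset.sum_congr rfl hrestB,
      Finset.sum_add_distrib, geom_tele q _ (by omega : 2*n-1-k+1 ≤ n),
      geom_tele q _ (by omega : n ≤ n+i),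
      Finset.sum_ite_eq (Finset.Ico n (n+i)) k
        (fun _ => -(q ^ ((n:ℝ)*((n:ℝ)+e-2) - e) * (q ^ e - q))),
      if_pos (by rw [Finset.mem_Ico]; omega)]
    have hA : q ^ (e + (i:ℝ) - 1) * q ^ ((n:ℝ)*((n:ℝ)+e-3) - e + 1) * q ^ n
        = q ^ ((n:ℝ)*((n:ℝ)+e-3)) * q ^ (n+i) := by
      rw [← Real.rpow_natCast q n, ← Real.rpow_natCast q (n+i), ← Real.rpow_add hq,
        ← Real.rpow_add hq, ← Real.rpow_add hq]
      congr 1; push_cast; ring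
    have hB : q ^ ((n:ℝ)*((n:ℝ)+e-3)) * q ^ n = q ^ ((n:ℝ)*((n:ℝ)+e-2) - e) * q ^ e := by
      rw [← Real.rpow_natCast q n, ← Real.rpow_add hq, ← Real.rpow_add hq]
      congr 1; push_cast; ring
    have hC : q ^ ((n:ℝ)*((n:ℝ)+e-2) - e) * q = q ^ (((n:ℝ)-1)*((n:ℝ)-1+e)) := by
      rw [← Real.rpow_add_one hq.ne' _]
      congr 1; push_cast; ring
    linear_combination hA + hB + hC
  · -- Case 4: trailing zeros
    have hv : vnB q e n i k = 0 := by
      rw [vnB, if_neg (by omega), if_neg (by omega), if_neg (by omega)]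
    rw [hv, mul_zero]
    have hsub : Finset.Ico (n-i) (n+i) ⊆ Finset.range (2*n) := by
      intro j hj; rw [Finset.mem_Ico] at hj; rw [Finset.mem_range]; omega
    have hzero : ∀ j ∈ Finset.range (2*n), j ∉ Finset.Ico (n-i) (n+i) →
        QnB q e n k j * vnB q e n i j = 0 := by
      intro j hj hnot
      rw [Finset.mem_range] at hj
      rw [Finset.mem_Ico] at hnot; push_neg at hnot
      by_cases h : j + 1 ≤ n - i
      · rw [vnB, if_pos h, mul_zero]
      · rw [vnB, if_neg h, if_neg (by omega), if_neg (by omega), mul_zero]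
    rw [← Finset.sum_subset hsub hzero,
      ← Finset.sum_Ico_consecutive _ (show n-i ≤ n by omega) (show n ≤ n+i by omega)]
    have hrestA : ∀ j ∈ Finset.Ico (n-i) n,
        QnB q e n k j * vnB q e n i j
          = (q-1) * ((q ^ (e + (i:ℝ) - 1) * q ^ ((n:ℝ)*((n:ℝ)+e-3) - e + 1)) * q ^ j) := by
      intro j hj; rw [Finset.mem_Ico] at hj
      have c1 : ¬ (k + 1 + (j + 1) < 2 * n + 1) := by omega
      have c2 : j + 1 ≤ n := by omega
      have c3 : ¬ (k + 1 + (j + 1) = 2 * n + 1) := by omega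
      have c5 : ¬ (j + 1 ≤ n - i) := by omega
      rw [QnB, vnB, if_neg c1, if_pos c2, if_neg c3, if_neg c5, if_pos c2]
      have h1 : (n:ℝ)*((n:ℝ)+e-3) - e + ((j:ℝ) + 1)
          = ((n:ℝ)*((n:ℝ)+e-3) - e + 1) + (j:ℝ) := by ring
      rw [h1, Real.rpow_add hq, Real.rpow_natCast]
      ring
    have hrestB : ∀ j ∈ Finset.Ico n (n+i),
        QnB q e n k j * vnB q e n i j
          = (q-1) * (-(q ^ ((n:ℝ)*((n:ℝ)+e-3))) * q ^ j) := by
      intro j hj; rw [Finset.mem_Ico] at hj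
      have c1 : ¬ (k + 1 + (j + 1) < 2 * n + 1) := by omega
      have c2 : ¬ (j + 1 ≤ n) := by omega
      have c3 : ¬ (k + 1 + (j + 1) = 2 * n + 1) := by omega
      have c4 : ¬ (k = j) := by omega
      have c5 : ¬ (j + 1 ≤ n - i) := by omega
      have c6 : j + 1 ≤ n + i := by omega
      rw [QnB, vnB, if_neg c1, if_neg c2, if_neg c3, if_neg c4, if_neg c5, if_neg c2, if_pos c6]
      have h1 : (n:ℝ)*((n:ℝ)+e-3) + ((j:ℝ) + 1) - 1 = (n:ℝ)*((n:ℝ)+e-3) + (j:ℝ) := by ring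
      rw [h1, Real.rpow_add hq, Real.rpow_natCast]
      ring
    rw [Finset.sum_congr rfl hrestA, Finset.sum_congr rfl hrestB,
      geom_tele q _ (by omega : n-i ≤ n), geom_tele q _ (by omega : n ≤ n+i)]
    have hA : q ^ (e + (i:ℝ) - 1) * q ^ ((n:ℝ)*((n:ℝ)+e-3) - e + 1) * q ^ n
        = q ^ ((n:ℝ)*((n:ℝ)+e-3)) * q ^ (n+i) := by
      rw [← Real.rpow_natCast q n, ← Real.rpow_natCast q (n+i), ← Real.rpow_add hq,
        ← Real.rpow_add hq, ← Real.rpow_add hq]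
      congr 1; push_cast; ring
    have hA' : q ^ (e + (i:ℝ) - 1) * q ^ ((n:ℝ)*((n:ℝ)+e-3) - e + 1) * q ^ (n-i)
        = q ^ ((n:ℝ)*((n:ℝ)+e-3)) * q ^ n := by
      rw [← Real.rpow_natCast q (n-i), ← Real.rpow_natCast q n, ← Real.rpow_add hq,
        ← Real.rpow_add hq, ← Real.rpow_add hq]
      congr 1; push_cast [Nat.cast_sub hi2]; ring
    linear_combination hA - hA'

/-- `v_i` is an eigenvector of `Q` with eigenvalue `-q^((n-1)(n-1+e))`. -/
theorem quotient_matrix_eigenvector_B (q : ℝ) (hq : 0 < q) (e : ℝ) (he : 0 ≤ e)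
    (n : ℕ) (hn : 2 ≤ n) (i : ℕ) (hi1 : 1 ≤ i) (hi2 : i ≤ n) :
    (QmatB q e n).mulVec (vvecB q e n i) =
      (-(q ^ (((n : ℝ) - 1) * ((n : ℝ) - 1 + e)))) • vvecB q e n i := by
  funext a
  have h1 : (QmatB q e n).mulVec (vvecB q e n i) a
      = ∑ b : Fin (2 * n), QnB q e n (a : ℕ) (b : ℕ) * vnB q e n i (b : ℕ) := by
    simp only [Matrix.mulVec, dotProduct, QmatB_eq_QnB, vvecB_eq_vnB]
  rw [h1, Fin.sum_univ_eq_sum_range (fun j => QnB q e n (a : ℕ) j * vnB q e n i j) (2 * n),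
    keyB q hq e n hn i hi1 hi2 (a : ℕ) a.isLt, Pi.smul_apply, smul_eq_mul, vvecB_eq_vnB]
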